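/- Let (V, ω_V) and (W, ω_W) be finite-dimensional symplectic vector spaces, Γ ⊆ V × W⁻ a Lagrangian subspace, Σ ⊆ W an isotropic subspace, and assume U₀ = {0}. Define ρ on the space of pairs ((v,w), w₁) with (v,w) ∈ Γ and w₁ ∈ Σ by ρ((v,w), w₁) := w − w₁. Then: (i) the range of ρ is exactly U₁°, the symplectic orthogonal of U₁ in W; and (ii) the map ker(ρ) → V sending ((v,w), w) ↦ v is injective with image Γ∘Σ, so ker(ρ) is linearly isomorphic to Γ∘Σ. -/

import Mathlib

/-- The symplectic orthogonal `S° = {v ∈ V : ω(s,v) = 0 for all s ∈ S}` of a subspace `S`. -/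
def symplOrth {V : Type*} [AddCommGroup V] [Module ℝ V]
    (ω : V →ₗ[ℝ] V →ₗ[ℝ] ℝ) (S : Submodule ℝ V) : Submodule ℝ V where
  carrier := {v | ∀ s ∈ S, ω s v = 0}
  add_mem' := by
    intro a b ha hb s hs
    simp [ha s hs, hb s hs]
  zero_mem' := by intro s hs; simp
  smul_mem' := by
    intro c a ha s hs
    simp [ha s hs]

/-- The twisted product symplectic form on `V × W⁻`:
`((v,w),(v',w')) ↦ ω_V(v,v') − ω_W(w,w')`. -/
def prodForm {V W : Type*} [AddCommGroup V] [Module ℝ V] [AddCommGroup W] [Module ℝ W]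
    (ωV : V →ₗ[ℝ] V →ₗ[ℝ] ℝ) (ωW : W →ₗ[ℝ] W →ₗ[ℝ] ℝ) :
    (V × W) →ₗ[ℝ] (V × W) →ₗ[ℝ] ℝ :=
  LinearMap.mk₂ ℝ (fun p q => ωV p.1 q.1 - ωW p.2 q.2)
    (by intro p p' q; simp; ring)
    (by intro c p q; simp; ring)
    (by intro p q q'; simp; ring)
    (by intro c p q; simp; ring)

/-- The composition `Γ∘Σ = {v ∈ V : ∃ w ∈ Σ, (v,w) ∈ Γ}` of a linear canonical relation
`Γ ⊆ V × W⁻` with a subspace `Σ ⊆ W`. -/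
def gammaComp {V W : Type*} [AddCommGroup V] [Module ℝ V] [AddCommGroup W] [Module ℝ W]
    (Γ : Submodule ℝ (V × W)) (S : Submodule ℝ W) : Submodule ℝ V where
  carrier := {v | ∃ w ∈ S, (v, w) ∈ Γ}
  add_mem' := by
    rintro a b ⟨wa, hwa, ha⟩ ⟨wb, hwb, hb⟩
    exact ⟨wa + wb, S.add_mem hwa hwb, Γ.add_mem ha hb⟩
  zero_mem' := ⟨0, S.zero_mem, Γ.zero_mem⟩
  smul_mem' := by
    rintro c a ⟨w, hw, h⟩
    exact ⟨c • w, S.smul_mem c hw, by simpa [Prod.smul_mk] using Γ.smul_mem c h⟩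


/-- The map `ρ : Γ ⊕ Σ → W`, `ρ((v,w),w₁) = w − w₁`. -/
def rhoMap {V W : Type*} [AddCommGroup V] [Module ℝ V] [AddCommGroup W] [Module ℝ W]
    (Γ : Submodule ℝ (V × W)) (S : Submodule ℝ W) : (Γ × S) →ₗ[ℝ] W :=
  (LinearMap.snd ℝ V W).comp (Γ.subtype.comp (LinearMap.fst ℝ Γ S)) -
    S.subtype.comp (LinearMap.snd ℝ Γ S)

/-- The projection `Γ ⊕ Σ → V`, `((v,w),w₁) ↦ v`. -/
def piMap {V W : Type*} [AddCommGroup V] [Module ℝ V] [AddCommGroup W] [Module ℝ W]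
    (Γ : Submodule ℝ (V × W)) (S : Submodule ℝ W) : (Γ × S) →ₗ[ℝ] V :=
  (LinearMap.fst ℝ V W).comp (Γ.subtype.comp (LinearMap.fst ℝ Γ S))

theorem symplOrth_eq_orthogonal {V : Type*} [AddCommGroup V] [Module ℝ V]
    (ω : V →ₗ[ℝ] V →ₗ[ℝ] ℝ) (S : Submodule ℝ V) :
    symplOrth ω S = LinearMap.BilinForm.orthogonal ω S := rfl

theorem mem_symplOrth {V : Type*} [AddCommGroup V] [Module ℝ V]
    (ω : V →ₗ[ℝ] V →ₗ[ℝ] ℝ) (S : Submodule ℝ V) (v : V) :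
    v ∈ symplOrth ω S ↔ ∀ s ∈ S, ω s v = 0 := Iff.rfl

/-- With `U₀ = 0`: (i) the range of `ρ` is exactly `U₁°`; (ii) the map
`ker(ρ) → V`, `((v,w),w) ↦ v` is injective with image `Γ∘Σ`, so `ker(ρ) ≅ Γ∘Σ`. -/
theorem stmt6 {V W : Type*}
    [AddCommGroup V] [Module ℝ V] [FiniteDimensional ℝ V]
    [AddCommGroup W] [Module ℝ W] [FiniteDimensional ℝ W]
    (ωV : V →ₗ[ℝ] V →ₗ[ℝ] ℝ) (ωW : W →ₗ[ℝ] W →ₗ[ℝ] ℝ)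
    (haltV : ∀ v, ωV v v = 0) (hndV : ∀ v, (∀ w, ωV v w = 0) → v = 0)
    (haltW : ∀ w, ωW w w = 0) (hndW : ∀ w, (∀ w', ωW w w' = 0) → w = 0)
    (Γ : Submodule ℝ (V × W)) (hΓ : Γ = symplOrth (prodForm ωV ωW) Γ)
    (S : Submodule ℝ W) (hS : S ≤ symplOrth ωW S)
    (hU0 : S ⊓ Γ.comap (LinearMap.inr ℝ V W) = ⊥)
    (U1 : Submodule ℝ W) (hU1 : U1 = symplOrth ωW S ⊓ Γ.comap (LinearMap.inr ℝ V W)) :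
    LinearMap.range (rhoMap Γ S) = symplOrth ωW U1 ∧
    Function.Injective ((piMap Γ S).comp (LinearMap.ker (rhoMap Γ S)).subtype) ∧
    LinearMap.range ((piMap Γ S).comp (LinearMap.ker (rhoMap Γ S)).subtype) =
      gammaComp Γ S ∧
    Nonempty ((LinearMap.ker (rhoMap Γ S)) ≃ₗ[ℝ] (gammaComp Γ S)) :=
 by
  have skewW : ∀ a b : W, ωW a b = - ωW b a := by
    intro a b
    have h := haltW (a + b)
    simp only [map_add, LinearMap.add_apply, haltW a, haltW b] at h
    linarith
  have hrefl : LinearMap.BilinForm.IsRefl ωW := by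
    intro a b h
    rw [skewW b a, h, neg_zero]
  have hnd : LinearMap.BilinForm.Nondegenerate ωW :=
    (LinearMap.IsRefl.nondegenerate_iff_separatingLeft hrefl).mpr hndW
  have hΓmem : ∀ p : V × W, p ∈ Γ ↔ ∀ q ∈ Γ, ωV q.1 p.1 - ωW q.2 p.2 = 0 := by
    intro p
    conv_lhs => rw [hΓ]
    exact Iff.rfl
  have hρ : ∀ x : Γ × S, rhoMap Γ S x = (x.1 : V × W).2 - (x.2 : W) := fun _ => rfl
  have key : symplOrth ωW (LinearMap.range (rhoMap Γ S)) = U1 := by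
    ext u
    rw [mem_symplOrth, hU1]
    constructor
    · intro hu
      have hSpart : u ∈ symplOrth ωW S := by
        rw [mem_symplOrth]
        intro s hs
        have h0 := hu (rhoMap Γ S (0, ⟨s, hs⟩)) ⟨(0, ⟨s, hs⟩), rfl⟩
        rw [hρ] at h0
        simp only [ZeroMemClass.coe_zero, Prod.snd_zero, zero_sub, map_neg,
          LinearMap.neg_apply, neg_eq_zero] at h0
        exact h0
      have hΓpart : ((0 : V), u) ∈ Γ := by
        rw [hΓmem]
        intro q hq
        have h0 := hu (rhoMap Γ S (⟨q, hq⟩, 0)) ⟨(⟨q, hq⟩, 0), rfl⟩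
        rw [hρ] at h0
        simp only [ZeroMemClass.coe_zero, sub_zero] at h0
        simp [h0]
      exact ⟨hSpart, hΓpart⟩
    · rintro ⟨hu1, hu2⟩ a ⟨x, rfl⟩
      rw [hρ]
      obtain ⟨⟨⟨v, w⟩, hvw⟩, ⟨s, hs⟩⟩ := x
      have h1 : ωW s u = 0 := hu1 s hs
      have h2 : ωW w u = 0 := by
        have := (hΓmem ((0 : V), u)).mp hu2 (v, w) hvw
        simpa using this
      simp only [map_sub, LinearMap.sub_apply, h1, h2, sub_zero]
  have h1 : LinearMap.range (rhoMap Γ S) = symplOrth ωW U1 := by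
    rw [← key, symplOrth_eq_orthogonal ωW (symplOrth ωW _), symplOrth_eq_orthogonal,
      LinearMap.BilinForm.orthogonal_orthogonal hnd hrefl]
  have hinj : Function.Injective ((piMap Γ S).comp (LinearMap.ker (rhoMap Γ S)).subtype) := by
    refine LinearMap.ker_eq_bot (M := ↥(LinearMap.ker (rhoMap Γ S))) (M₂ := V)
      (f := (piMap Γ S).comp (LinearMap.ker (rhoMap Γ S)).subtype) |>.mp ?_
    rw [Submodule.eq_bot_iff]
    rintro ⟨⟨⟨⟨v, w⟩, hvw⟩, ⟨s, hs⟩⟩, hker⟩ hx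
    have hker' : w - s = 0 := hker
    have hv : v = 0 := hx
    have hws : w = s := sub_eq_zero.mp hker'
    have hsΓ : s ∈ Γ.comap (LinearMap.inr ℝ V W) := by
      have : ((0 : V), s) ∈ Γ := by rw [← hv, ← hws]; exact hvw
      exact this
    have hs0 : s = 0 := by
      have : s ∈ (⊥ : Submodule ℝ W) := hU0 ▸ (Submodule.mem_inf.mpr ⟨hs, hsΓ⟩)
      simpa using this
    subst hv hws hs0
    rfl
  have hrange : LinearMap.range ((piMap Γ S).comp (LinearMap.ker (rhoMap Γ S)).subtype) =
      gammaComp Γ S := by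
    ext v
    constructor
    · rintro ⟨⟨⟨⟨⟨v', w⟩, hvw⟩, ⟨s, hs⟩⟩, hker⟩, rfl⟩
      have hker' : w - s = 0 := hker
      have hws : w = s := sub_eq_zero.mp hker'
      exact ⟨w, hws ▸ hs, hvw⟩
    · rintro ⟨w, hw, hvw⟩
      refine ⟨⟨(⟨(v, w), hvw⟩, ⟨w, hw⟩), ?_⟩, rfl⟩
      show rhoMap Γ S _ = 0
      rw [hρ]
      simp
  exact ⟨h1, hinj, hrange,
    ⟨(LinearEquiv.ofInjective _ hinj).trans (LinearEquiv.ofEq _ _ hrange)⟩⟩
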